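/- (Cotlar–Stein lemma, as used in the paper.) Let H be a complex Hilbert space, r ∈ ℕ, and let {T_j}_{j∈ℤ^r} be a family of bounded linear operators on H. Suppose there are nonnegative numbers {γ(j)}_{j∈ℤ^r} such that ‖T_i^* T_j‖ ≤ γ(i−j)² and ‖T_i T_j^*‖ ≤ γ(i−j)² for all i, j ∈ ℤ^r, and M := Σ_{j∈ℤ^r} γ(j) < ∞. Then for every finite subset F ⊂ ℤ^r, the operator T_F := Σ_{j∈F} T_j satisfies ‖T_F‖ ≤ M. -/

import Mathlib

open scoped BigOperators
open ContinuousLinearMap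

section CotlarAux

variable {H : Type*} [NormedAddCommGroup H] [InnerProductSpace ℂ H] [CompleteSpace H]
variable {ι : Type*}

/-- Alternating product `T_{j₁}^* T_{j₂} T_{j₃}^* ⋯` (starred at the head when `b = true`). -/
noncomputable def csProd (T : ι → H →L[ℂ] H) : Bool → List ι → (H →L[ℂ] H)
  | _, [] => 1
  | b, j :: l => (if b then adjoint (T j) else T j) ∘L csProd T (!b) l

/-- Bound obtained by pairing consecutive elements two at a time. -/
def csE (g0 : ℝ) (d : ι → ι → ℝ) : List ι → ℝ
  | [] => 1
  | [_] => g0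
  | a :: b :: l => d a b ^ 2 * csE g0 d l

/-- Product of `d` over consecutive pairs. -/
def csD (d : ι → ι → ℝ) : List ι → ℝ
  | [] => 1
  | [_] => 1
  | a :: b :: l => d a b * csD d (b :: l)

/-- Alternating power `S^* S S^* S ⋯` with `n` factors. -/
noncomputable def csAlt (S : H →L[ℂ] H) : ℕ → Bool → (H →L[ℂ] H)
  | 0, _ => 1
  | n + 1, b => (if b then adjoint S else S) ∘L csAlt S n (!b)

lemma csE_nonneg {g0 : ℝ} (hg0 : 0 ≤ g0) (d : ι → ι → ℝ) : ∀ l : List ι, 0 ≤ csE g0 d l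
  | [] => zero_le_one
  | [_] => hg0
  | _ :: _ :: l => mul_nonneg (sq_nonneg _) (csE_nonneg hg0 d l)

lemma csD_nonneg {d : ι → ι → ℝ} (hd : ∀ a b, 0 ≤ d a b) : ∀ l : List ι, 0 ≤ csD d l
  | [] => zero_le_one
  | [_] => zero_le_one
  | a :: b :: l => mul_nonneg (hd a b) (csD_nonneg hd (b :: l))

lemma norm_csProd_le_csE {T : ι → H →L[ℂ] H} {g0 : ℝ} {d : ι → ι → ℝ}
    (hg0 : 0 ≤ g0) (hT : ∀ j, ‖T j‖ ≤ g0)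
    (h1 : ∀ a b, ‖adjoint (T a) ∘L T b‖ ≤ d a b ^ 2)
    (h2 : ∀ a b, ‖T a ∘L adjoint (T b)‖ ≤ d a b ^ 2) :
    ∀ (b : Bool) (l : List ι), ‖csProd T b l‖ ≤ csE g0 d l
  | b, [] => by
      simp only [csProd, csE]; exact (ContinuousLinearMap.norm_id_le :
        ‖ContinuousLinearMap.id ℂ H‖ ≤ 1)
  | b, [a] => by
      have h2' : csProd T b [a] = (if b then adjoint (T a) else T a) ∘L 1 := rfl
      rw [h2', ContinuousLinearMap.one_def, ContinuousLinearMap.comp_id]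
      cases b
      · simpa [csE] using hT a
      · simpa [csE, LinearIsometryEquiv.norm_map adjoint (T a)] using hT a
  | b, a :: c :: l => by
      have key : csProd T b (a :: c :: l)
          = ((if b then adjoint (T a) else T a) ∘L (if (!b) then adjoint (T c) else T c))
            ∘L csProd T b l := by
        cases b <;> simp [csProd, ContinuousLinearMap.comp_assoc]
      have hpair : ‖(if b then adjoint (T a) else T a) ∘L
          (if (!b) then adjoint (T c) else T c)‖ ≤ d a c ^ 2 := by
        cases b
        · simpa using h2 a c
        · simpa using h1 a c
      calc ‖csProd T b (a :: c :: l)‖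
          ≤ ‖(if b then adjoint (T a) else T a) ∘L (if (!b) then adjoint (T c) else T c)‖
            * ‖csProd T b l‖ := by rw [key]; exact opNorm_comp_le _ _
        _ ≤ d a c ^ 2 * csE g0 d l := by
            exact mul_le_mul hpair (norm_csProd_le_csE hg0 hT h1 h2 b l) (norm_nonneg _)
              (sq_nonneg _)
        _ = csE g0 d (a :: c :: l) := rfl
  termination_by b l => l.length

lemma csE_geom (g0 : ℝ) (d : ι → ι → ℝ) : ∀ (l : List ι) (a : ι),
    csE g0 d (a :: l) * (g0 * csE g0 d l) = (g0 * csD d (a :: l)) ^ 2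
  | [], a => by simp [csE, csD]; ring
  | [b], a => by simp [csE, csD]; ring
  | b :: c :: t, a => by
      have ih := csE_geom g0 d t c
      simp only [csE, csD] at ih ⊢
      linear_combination (d a b ^ 2 * d b c ^ 2) * ih
  termination_by l a => l.length

lemma norm_csProd_le {T : ι → H →L[ℂ] H} {g0 : ℝ} {d : ι → ι → ℝ}
    (hg0 : 0 ≤ g0) (hd : ∀ a b, 0 ≤ d a b) (hT : ∀ j, ‖T j‖ ≤ g0)
    (h1 : ∀ a b, ‖adjoint (T a) ∘L T b‖ ≤ d a b ^ 2)
    (h2 : ∀ a b, ‖T a ∘L adjoint (T b)‖ ≤ d a b ^ 2)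
    (a : ι) (l : List ι) :
    ‖csProd T true (a :: l)‖ ≤ g0 * csD d (a :: l) := by
  have hE1 := norm_csProd_le_csE hg0 hT h1 h2 true (a :: l)
  have hE2 : ‖csProd T true (a :: l)‖ ≤ g0 * csE g0 d l := by
    have h0 : csProd T true (a :: l) = adjoint (T a) ∘L csProd T false l := rfl
    rw [h0]
    calc ‖adjoint (T a) ∘L csProd T false l‖
        ≤ ‖adjoint (T a)‖ * ‖csProd T false l‖ := opNorm_comp_le _ _
      _ ≤ g0 * csE g0 d l := by
          refine mul_le_mul ?_ (norm_csProd_le_csE hg0 hT h1 h2 false l) (norm_nonneg _) hg0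
          simpa [LinearIsometryEquiv.norm_map adjoint (T a)] using hT a
  have hsq : ‖csProd T true (a :: l)‖ ^ 2 ≤ (g0 * csD d (a :: l)) ^ 2 := by
    rw [← csE_geom g0 d l a, sq]
    exact mul_le_mul hE1 hE2 (norm_nonneg _) (csE_nonneg hg0 d (a :: l))
  nlinarith [norm_nonneg (csProd T true (a :: l)),
    mul_nonneg hg0 (csD_nonneg hd (a :: l)), hsq]

lemma sum_piFinset_zero {β : Type*} [AddCommMonoid β] (F : Finset ι)
    (g : (Fin 0 → ι) → β) :
    ∑ f ∈ Fintype.piFinset (fun _ : Fin 0 => F), g f = g ![] := by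
  have h : Fintype.piFinset (fun _ : Fin 0 => F) = {![]} := by
    ext f
    constructor
    · intro _
      simp only [Finset.mem_singleton]
      exact Subsingleton.elim f _
    · intro _
      simp only [Fintype.mem_piFinset]
      exact fun i => i.elim0
  rw [h, Finset.sum_singleton]

lemma sum_piFinset_succ {β : Type*} [AddCommMonoid β] (n : ℕ) (F : Finset ι)
    (g : (Fin (n + 1) → ι) → β) :
    ∑ f ∈ Fintype.piFinset (fun _ : Fin (n + 1) => F), g f
      = ∑ j ∈ F, ∑ f ∈ Fintype.piFinset (fun _ : Fin n => F), g (Fin.cons j f) := by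
  rw [← Finset.sum_product']
  refine Finset.sum_nbij' (fun f => (f 0, Fin.tail f)) (fun p => Fin.cons p.1 p.2)
    ?_ ?_ ?_ ?_ ?_
  · intro f hf
    simp only [Fintype.mem_piFinset] at hf
    simp only [Finset.mem_product, Fintype.mem_piFinset]
    exact ⟨hf 0, fun i => hf _⟩
  · intro p hp
    simp only [Finset.mem_product, Fintype.mem_piFinset] at hp
    simp only [Fintype.mem_piFinset]
    intro i
    refine Fin.cases ?_ ?_ i
    · simpa using hp.1
    · intro i'; simpa using hp.2 i'
  · intro f _
    exact Fin.cons_self_tail f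
  · intro p _
    exact Prod.ext (by simp) (by simp)
  · intro f _
    rw [Fin.cons_self_tail]

lemma ofFn_cons (j : ι) {n : ℕ} (f : Fin n → ι) :
    List.ofFn (Fin.cons j f) = j :: List.ofFn f := by
  rw [List.ofFn_succ]
  simp

lemma csAlt_eq_sum (T : ι → H →L[ℂ] H) (F : Finset ι) :
    ∀ (n : ℕ) (b : Bool), csAlt (∑ j ∈ F, T j) n b
      = ∑ f ∈ Fintype.piFinset (fun _ : Fin n => F), csProd T b (List.ofFn f)
  | 0, b => by
      rw [sum_piFinset_zero]
      simp [csAlt, csProd]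
  | n + 1, b => by
      rw [sum_piFinset_succ]
      have ih := csAlt_eq_sum T F n (!b)
      have hS : (if b then adjoint (∑ j ∈ F, T j) else (∑ j ∈ F, T j))
          = ∑ j ∈ F, (if b then adjoint (T j) else T j) := by
        cases b <;> simp [map_sum]
      calc csAlt (∑ j ∈ F, T j) (n + 1) b
          = (∑ j ∈ F, (if b then adjoint (T j) else T j))
            * (∑ f ∈ Fintype.piFinset (fun _ : Fin n => F), csProd T (!b) (List.ofFn f)) := by
            rw [← hS, ← ih]; rfl
        _ = ∑ j ∈ F, ∑ f ∈ Fintype.piFinset (fun _ : Fin n => F),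
              (if b then adjoint (T j) else T j) * csProd T (!b) (List.ofFn f) :=
            Finset.sum_mul_sum _ _ _ _
        _ = ∑ j ∈ F, ∑ f ∈ Fintype.piFinset (fun _ : Fin n => F),
              csProd T b (List.ofFn (Fin.cons j f)) := by
            refine Finset.sum_congr rfl fun j _ => Finset.sum_congr rfl fun f _ => ?_
            rw [ofFn_cons]
            rfl

lemma sum_csD_le {d : ι → ι → ℝ} (hd : ∀ a b, 0 ≤ d a b) {M : ℝ} (hM : 0 ≤ M)
    (F : Finset ι) (hrow : ∀ a, ∑ b ∈ F, d a b ≤ M) :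
    ∀ (n : ℕ) (a : ι),
      ∑ f ∈ Fintype.piFinset (fun _ : Fin n => F), csD d (a :: List.ofFn f) ≤ M ^ n
  | 0, a => by
      rw [sum_piFinset_zero]
      simp [csD]
  | n + 1, a => by
      rw [sum_piFinset_succ]
      have step : ∀ j ∈ F,
          ∑ f ∈ Fintype.piFinset (fun _ : Fin n => F), csD d (a :: List.ofFn (Fin.cons j f))
            ≤ d a j * M ^ n := by
        intro j _
        have heq : ∀ f : Fin n → ι,
            csD d (a :: List.ofFn (Fin.cons j f)) = d a j * csD d (j :: List.ofFn f) := by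
          intro f; rw [ofFn_cons]; rfl
        calc ∑ f ∈ Fintype.piFinset (fun _ : Fin n => F), csD d (a :: List.ofFn (Fin.cons j f))
            = d a j * ∑ f ∈ Fintype.piFinset (fun _ : Fin n => F), csD d (j :: List.ofFn f) := by
              rw [Finset.mul_sum]
              exact Finset.sum_congr rfl fun f _ => heq f
          _ ≤ d a j * M ^ n :=
              mul_le_mul_of_nonneg_left (sum_csD_le hd hM F hrow n j) (hd a j)
      calc ∑ j ∈ F, ∑ f ∈ Fintype.piFinset (fun _ : Fin n => F),
              csD d (a :: List.ofFn (Fin.cons j f))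
          ≤ ∑ j ∈ F, d a j * M ^ n := Finset.sum_le_sum step
        _ = (∑ j ∈ F, d a j) * M ^ n := (Finset.sum_mul _ _ _).symm
        _ ≤ M * M ^ n := mul_le_mul_of_nonneg_right (hrow a) (pow_nonneg hM n)
        _ = M ^ (n + 1) := (pow_succ' M n).symm

lemma csAlt_succ (S : H →L[ℂ] H) (n : ℕ) (b : Bool) :
    csAlt S (n + 1) b = (if b then adjoint S else S) ∘L csAlt S n (!b) := rfl

lemma csAlt_two_mul (S : H →L[ℂ] H) : ∀ m : ℕ, csAlt S (2 * m) true = (adjoint S * S) ^ m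
  | 0 => by rw [Nat.mul_zero, pow_zero]; rfl
  | m + 1 => by
      rw [Nat.mul_succ]
      show adjoint S * (S * csAlt S (2 * m) true) = (adjoint S * S) ^ (m + 1)
      rw [csAlt_two_mul S m, pow_succ', mul_assoc]

end CotlarAux

/-- **Cotlar–Stein lemma.** If a family `{T_j}_{j ∈ ℤ^r}` of bounded
operators on a complex Hilbert space satisfies `‖T_i^* T_j‖ ≤ γ(i-j)²` and
`‖T_i T_j^*‖ ≤ γ(i-j)²` with `M = Σ γ(j) < ∞`, then every finite sum `Σ_{j ∈ F} T_j`
has operator norm at most `M`. -/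
theorem statement1 {H : Type*} [NormedAddCommGroup H] [InnerProductSpace ℂ H]
    [CompleteSpace H] (r : ℕ) (T : (Fin r → ℤ) → H →L[ℂ] H) (γ : (Fin r → ℤ) → ℝ)
    (hγ : ∀ j, 0 ≤ γ j)
    (h₁ : ∀ i j, ‖(ContinuousLinearMap.adjoint (T i)).comp (T j)‖ ≤ (γ (i - j)) ^ 2)
    (h₂ : ∀ i j, ‖(T i).comp (ContinuousLinearMap.adjoint (T j))‖ ≤ (γ (i - j)) ^ 2)
    (hsum : Summable γ) :
    ∀ F : Finset (Fin r → ℤ), ‖∑ j ∈ F, T j‖ ≤ ∑' j, γ j := by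
  intro F
  let ι := Fin r → ℤ
  set M : ℝ := ∑' j, γ j with hMdef
  set d : ι → ι → ℝ := fun a b => γ (a - b) with hddef
  set S : H →L[ℂ] H := ∑ j ∈ F, T j with hSdef
  have hd : ∀ a b : ι, 0 ≤ d a b := fun a b => hγ _
  have hM0 : 0 ≤ M := tsum_nonneg hγ
  have hγ0M : γ 0 ≤ M := Summable.le_tsum hsum 0 fun j _ => hγ j
  have hrow : ∀ a : ι, ∑ b ∈ F, d a b ≤ M := by
    intro a
    have hs : Summable fun b : ι => γ (a - b) := (Equiv.subLeft a).summable_iff.mpr hsum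
    calc ∑ b ∈ F, d a b ≤ ∑' b : ι, γ (a - b) := Summable.sum_le_tsum F (fun _ _ => hγ _) hs
      _ = M := (Equiv.subLeft a).tsum_eq γ
  have hTle : ∀ j : ι, ‖T j‖ ≤ γ 0 := by
    intro j
    have h := h₁ j j
    rw [sub_self] at h
    have hc : ‖ContinuousLinearMap.adjoint (T j) ∘L T j‖ = ‖T j‖ * ‖T j‖ :=
      ContinuousLinearMap.norm_adjoint_comp_self (T j)
    nlinarith [norm_nonneg (T j), hγ 0]
  have h1' : ∀ a b : ι, ‖ContinuousLinearMap.adjoint (T a) ∘L T b‖ ≤ d a b ^ 2 := fun a b =>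
    h₁ a b
  have h2' : ∀ a b : ι, ‖T a ∘L ContinuousLinearMap.adjoint (T b)‖ ≤ d a b ^ 2 := fun a b =>
    h₂ a b
  -- the main power bound
  have boundn : ∀ n : ℕ, ‖csAlt S (n + 1) true‖ ≤ γ 0 * F.card * M ^ n := by
    intro n
    rw [hSdef, csAlt_eq_sum T F (n + 1) true, sum_piFinset_succ]
    calc ‖∑ j ∈ F, ∑ f ∈ Fintype.piFinset (fun _ : Fin n => F),
            csProd T true (List.ofFn (Fin.cons j f))‖
        ≤ ∑ j ∈ F, ‖∑ f ∈ Fintype.piFinset (fun _ : Fin n => F),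
            csProd T true (List.ofFn (Fin.cons j f))‖ := norm_sum_le _ _
      _ ≤ ∑ j ∈ F, ∑ f ∈ Fintype.piFinset (fun _ : Fin n => F),
            ‖csProd T true (List.ofFn (Fin.cons j f))‖ :=
          Finset.sum_le_sum fun j _ => norm_sum_le _ _
      _ ≤ ∑ j ∈ F, ∑ f ∈ Fintype.piFinset (fun _ : Fin n => F),
            γ 0 * csD d (j :: List.ofFn f) := by
          refine Finset.sum_le_sum fun j _ => Finset.sum_le_sum fun f _ => ?_
          rw [ofFn_cons]
          exact norm_csProd_le (hγ 0) hd hTle h1' h2' j (List.ofFn f)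
      _ = ∑ j ∈ F, γ 0 * ∑ f ∈ Fintype.piFinset (fun _ : Fin n => F),
            csD d (j :: List.ofFn f) := by
          exact Finset.sum_congr rfl fun j _ => (Finset.mul_sum _ _ _).symm
      _ ≤ ∑ j ∈ F, γ 0 * M ^ n := by
          refine Finset.sum_le_sum fun j _ => ?_
          exact mul_le_mul_of_nonneg_left (sum_csD_le hd hM0 F hrow n j) (hγ 0)
      _ = F.card * (γ 0 * M ^ n) := by rw [Finset.sum_const, nsmul_eq_mul]
      _ = γ 0 * F.card * M ^ n := by ring
  have hsa : IsSelfAdjoint (ContinuousLinearMap.adjoint S * S) := by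
    rw [IsSelfAdjoint, star_mul, ContinuousLinearMap.star_eq_adjoint,
      ContinuousLinearMap.star_eq_adjoint, ContinuousLinearMap.adjoint_adjoint]
  have hpow : ∀ m : ℕ, ‖S‖ ^ (2 * 2 ^ m) ≤ γ 0 * F.card * M ^ (2 * 2 ^ m - 1) := by
    intro m
    have hnormA : ‖ContinuousLinearMap.adjoint S * S‖ = ‖S‖ * ‖S‖ :=
      ContinuousLinearMap.norm_adjoint_comp_self S
    have hnp : ‖(ContinuousLinearMap.adjoint S * S) ^ 2 ^ m‖
        = ‖ContinuousLinearMap.adjoint S * S‖ ^ 2 ^ m := by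
      have h := hsa.nnnorm_pow_two_pow m
      calc ‖(ContinuousLinearMap.adjoint S * S) ^ 2 ^ m‖
          = ((‖(ContinuousLinearMap.adjoint S * S) ^ 2 ^ m‖₊ : ℝ)) := (coe_nnnorm _).symm
        _ = ((‖ContinuousLinearMap.adjoint S * S‖₊ ^ 2 ^ m : NNReal) : ℝ) := by rw [h]
        _ = ‖ContinuousLinearMap.adjoint S * S‖ ^ 2 ^ m := by push_cast; rfl
    have hstep : ‖S‖ ^ (2 * 2 ^ m) = ‖csAlt S (2 * 2 ^ m) true‖ := by
      rw [csAlt_two_mul S (2 ^ m), hnp, hnormA, ← sq, ← pow_mul]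
    have hk : 2 * 2 ^ m = (2 * 2 ^ m - 1) + 1 := by
      have : 1 ≤ 2 ^ m := Nat.one_le_two_pow
      omega
    rw [hstep, hk]
    exact boundn (2 * 2 ^ m - 1)
  -- conclude
  by_contra hcon
  push_neg at hcon
  rcases hM0.lt_or_eq with hMpos | hMzero
  · -- M > 0
    have ht : 1 < ‖S‖ / M := (one_lt_div hMpos).mpr hcon
    have key : ∀ m : ℕ, (‖S‖ / M) ^ (2 * 2 ^ m) ≤ γ 0 * F.card / M := by
      intro m
      rw [div_pow, div_le_div_iff₀ (pow_pos hMpos _) hMpos]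
      have hk : (2 * 2 ^ m - 1) + 1 = 2 * 2 ^ m := by
        have : 1 ≤ 2 ^ m := Nat.one_le_two_pow
        omega
      calc ‖S‖ ^ (2 * 2 ^ m) * M
          ≤ (γ 0 * F.card * M ^ (2 * 2 ^ m - 1)) * M :=
            mul_le_mul_of_nonneg_right (hpow m) hM0
        _ = γ 0 * F.card * M ^ (2 * 2 ^ m) := by
            rw [mul_assoc, ← pow_succ, hk]
    obtain ⟨n, hn⟩ := pow_unbounded_of_one_lt (γ 0 * F.card / M) ht
    have hle : (‖S‖ / M) ^ n ≤ (‖S‖ / M) ^ (2 * 2 ^ n) := by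
      refine pow_le_pow_right₀ ht.le ?_
      have := Nat.lt_two_pow_self (n := n)
      omega
    have := key n
    linarith
  · -- M = 0
    have hγ00 : γ 0 = 0 := le_antisymm (hMzero ▸ hγ0M) (hγ 0)
    have hSle : ‖S‖ ≤ 0 := by
      calc ‖S‖ ≤ ∑ j ∈ F, ‖T j‖ := norm_sum_le _ _
        _ ≤ ∑ j ∈ F, (0 : ℝ) := Finset.sum_le_sum fun j _ => (hTle j).trans_eq hγ00
        _ = 0 := Finset.sum_const_zero
    exact absurd hcon (not_lt.mpr (hSle.trans hMzero.le))
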